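/- Let A be an AW*-algebra, G = ⟨g⟩ a discrete cyclic group, and α : G → Aut(A) a group homomorphism. If α_g is an inner automorphism, then there exists a unitary representation u : G → U(A) such that α_h = Ad(u_h) for all h ∈ G. -/

import Mathlib

open NormedSpace

section Aux

variable {A : Type*} [CStarAlgebra A]

/-- Conjugation by a unitary, as a plain function. -/
noncomputable def uconj (U : unitary A) : A → A := fun a => (U : A) * a * star (U : A)

lemma uconj_mul (U V : unitary A) : uconj (U * V) = uconj U ∘ uconj V := by
  funext a
  simp only [uconj, Function.comp_apply, Submonoid.coe_mul, star_mul, mul_assoc]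

lemma uconj_one : uconj (1 : unitary A) = id := by
  funext a; simp [uconj]

lemma uconj_inv_comp (U : unitary A) : uconj U⁻¹ ∘ uconj U = id := by
  rw [← uconj_mul, inv_mul_cancel, uconj_one]

lemma uconj_comp_inv (U : unitary A) : uconj U ∘ uconj U⁻¹ = id := by
  rw [← uconj_mul, mul_inv_cancel, uconj_one]

lemma uconj_inv_congr {U U' : unitary A} (h : uconj U = uconj U') :
    uconj U⁻¹ = uconj U'⁻¹ := by
  funext a
  calc uconj U⁻¹ a = uconj U⁻¹ (uconj U' (uconj U'⁻¹ a)) := by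
        rw [← Function.comp_apply (f := uconj U') (g := uconj U'⁻¹), uconj_comp_inv]; rfl
    _ = uconj U⁻¹ (uconj U (uconj U'⁻¹ a)) := by rw [h]
    _ = uconj U'⁻¹ a := by
        rw [← Function.comp_apply (f := uconj U⁻¹) (g := uconj U), uconj_inv_comp]; rfl

lemma uconj_pow_congr {U U' : unitary A} (h : uconj U = uconj U') (n : ℕ) :
    uconj (U ^ n) = uconj (U' ^ n) := by
  induction n with
  | zero => simp
  | succ n ih => rw [pow_succ, pow_succ, uconj_mul, uconj_mul, ih, h]

lemma uconj_zpow_congr {U U' : unitary A} (h : uconj U = uconj U') (z : ℤ) :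
    uconj (U ^ z) = uconj (U' ^ z) := by
  obtain ⟨n, hn | hn⟩ := z.eq_nat_or_neg <;> subst hn
  · rw [zpow_natCast, zpow_natCast]; exact uconj_pow_congr h n
  · rw [zpow_neg, zpow_natCast, zpow_neg, zpow_natCast]
    exact uconj_inv_congr (uconj_pow_congr h n)

end Aux

/-- Let `A` be an AW*-algebra — formalized as a unital C*-algebra in which every
central unitary admits a self-adjoint central logarithm (the property of AW*-algebras used
in the proof, via Sakai's lemma) — let `G = ⟨g⟩` be a discrete cyclic group, and
`α : G → Aut(A)` a homomorphism.  If `α g` is inner, then there is a unitary representation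
`u : G → U(A)` with `α h = Ad (u h)` for all `h ∈ G`. -/
theorem stmt4 {A : Type*} [CStarAlgebra A]
    (hlog : ∀ w : A, w ∈ Set.center A → w ∈ unitary A →
      ∃ t : A, t ∈ Set.center A ∧ IsSelfAdjoint t ∧ w = exp (Complex.I • t))
    {G : Type*} [Group G] (g : G) (hcyc : ∀ x : G, x ∈ Subgroup.zpowers g)
    (α : G → (A ≃⋆ₐ[ℂ] A))
    (hα1 : ∀ a : A, α 1 a = a)
    (hαmul : ∀ (x y : G) (a : A), α (x * y) a = α x (α y a))
    (v : A) (hv : v ∈ unitary A) (hinner : ∀ a : A, α g a = v * a * star v) :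
    ∃ u : G →* unitary A, ∀ (h : G) (a : A), α h a = (u h : A) * a * star ((u h : A)) := by
  set V : unitary A := ⟨v, hv⟩ with hVdef
  have hαg : ∀ a, α g a = uconj V a := hinner
  have hαinv : ∀ (x : G) (U : unitary A), (∀ a, α x a = uconj U a) →
      ∀ a, α x⁻¹ a = uconj U⁻¹ a := by
    intro x U hx a
    have h1 : α x (α x⁻¹ a) = a := by rw [← hαmul, mul_inv_cancel, hα1]
    have h2 : uconj U (α x⁻¹ a) = a := by rw [← hx]; exact h1
    calc α x⁻¹ a = uconj U⁻¹ (uconj U (α x⁻¹ a)) := by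
          rw [← Function.comp_apply (f := uconj U⁻¹) (g := uconj U), uconj_inv_comp]; rfl
      _ = uconj U⁻¹ a := by rw [h2]
  have hαpow : ∀ n : ℕ, ∀ a, α (g ^ n) a = uconj (V ^ n) a := by
    intro n
    induction n with
    | zero => intro a; rw [pow_zero, pow_zero, hα1, uconj_one]; rfl
    | succ n ih =>
      intro a
      rw [pow_succ, hαmul, hαg, ih, pow_succ, uconj_mul]
      rfl
  have hαzpow : ∀ z : ℤ, ∀ a, α (g ^ z) a = uconj (V ^ z) a := by
    intro z a
    obtain ⟨n, hn | hn⟩ := z.eq_nat_or_neg <;> subst hn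
    · rw [zpow_natCast, zpow_natCast]; exact hαpow n a
    · rw [zpow_neg, zpow_natCast, zpow_neg, zpow_natCast]
      exact hαinv _ _ (hαpow n) a
  obtain ⟨W, hWc, hWtor⟩ : ∃ W : unitary A, uconj W = uconj V ∧
      ∀ z : ℤ, g ^ z = 1 → W ^ z = 1 := by
    rcases Nat.eq_zero_or_pos (orderOf g) with h0 | hpos
    · refine ⟨V, rfl, fun z hz => ?_⟩
      have hd : (orderOf g : ℤ) ∣ z := orderOf_dvd_iff_zpow_eq_one.mpr hz
      rw [h0] at hd
      simp only [Nat.cast_zero, zero_dvd_iff] at hd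
      rw [hd, zpow_zero]
    · set n := orderOf g with hndef
      have hgn : g ^ n = 1 := pow_orderOf_eq_one g
      set p : A := ((V ^ n : unitary A) : A) with hpdef
      have hp : ∀ a : A, a = p * a * star p := by
        intro a
        have := hαpow n a
        rw [hgn, hα1] at this
        exact this
      have hpu : p ∈ unitary A := (V ^ n).2
      have hpc : ∀ a : A, a * p = p * a := by
        intro a
        calc a * p = (p * a * star p) * p := by rw [← hp a]
          _ = p * a * (star p * p) := by rw [mul_assoc]
          _ = p * a := by rw [Unitary.mem_iff.mp hpu |>.1, mul_one]
      obtain ⟨t, htc, hts, htp⟩ := hlog p (Semigroup.mem_center_iff.mpr hpc) hpu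
      have hn0 : (n : ℂ) ≠ 0 := Nat.cast_ne_zero.mpr hpos.ne'
      set s : A := ((n : ℂ)⁻¹) • t with hsdef
      have hss : IsSelfAdjoint s := by
        rw [hsdef]
        refine IsSelfAdjoint.smul (r := ((n : ℂ)⁻¹)) ?_ hts
        rw [isSelfAdjoint_iff]
        simp [Complex.star_def, map_inv₀]
      have hsk : Complex.I • s ∈ skewAdjoint A := by
        rw [skewAdjoint.mem_iff, star_smul, hss.star_eq, Complex.star_def, Complex.conj_I,
          neg_smul]
      set e : A := exp (Complex.I • s) with hedef
      let +nondep : NormedAlgebra ℚ A := .restrictScalars ℚ ℂ A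
      have heu : e ∈ unitary A := exp_mem_unitary_of_mem_skewAdjoint hsk
      have hecomm : ∀ a : A, Commute e a := by
        intro a
        have h1 : Commute t a := ((Semigroup.mem_center_iff.mp htc) a).symm
        have h2 : Commute (Complex.I • s) a := by
          rw [hsdef]; exact (h1.smul_left _).smul_left _
        exact h2.exp_left
      set E : unitary A := ⟨e, heu⟩ with hEdef
      have hEn : E ^ n = V ^ n := by
        apply Subtype.ext
        show e ^ n = p
        rw [hedef, ← exp_nsmul, htp]
        congr 1
        rw [smul_comm]
        congr 1
        rw [hsdef, ← Nat.cast_smul_eq_nsmul ℂ, smul_smul, mul_inv_cancel₀ hn0, one_smul]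
      have hcomE : Commute V E⁻¹ := by
        have hc : Commute V E := Subtype.ext ((hecomm v).symm)
        exact hc.inv_right
      refine ⟨V * E⁻¹, ?_, ?_⟩
      · rw [uconj_mul]
        have hid : uconj E⁻¹ = id := by
          funext a
          show ((E⁻¹ : unitary A) : A) * a * star ((E⁻¹ : unitary A) : A) = a
          have hcE : ((E⁻¹ : unitary A) : A) = star e := rfl
          rw [hcE, star_star]
          have hse : star e * a = a * star e := by
            have := congrArg star (hecomm (star a)).eq
            simpa [star_mul] using this.symm
          rw [hse, mul_assoc, Unitary.mem_iff.mp heu |>.1, mul_one]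
        rw [hid, Function.comp_id]
      · intro z hz
        have hd : (n : ℤ) ∣ z := orderOf_dvd_iff_zpow_eq_one.mpr hz
        obtain ⟨m, hm⟩ := hd
        subst hm
        have h1 : (V * E⁻¹) ^ (n : ℤ) = 1 := by
          rw [zpow_natCast, hcomE.mul_pow, inv_pow, hEn, mul_inv_cancel]
        rw [zpow_mul, h1, one_zpow]
  have hWzc : ∀ z : ℤ, uconj (W ^ z) = uconj (V ^ z) := uconj_zpow_congr hWc
  choose k hk using fun x => Subgroup.mem_zpowers_iff.mp (hcyc x)
  have hsame : ∀ i j : ℤ, g ^ i = g ^ j → W ^ i = W ^ j := by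
    intro i j hij
    have h1 : g ^ (i - j) = 1 := by rw [zpow_sub, hij, mul_inv_cancel]
    have h2 := hWtor _ h1
    rw [zpow_sub, mul_inv_eq_one] at h2
    exact h2
  refine ⟨{ toFun := fun x => W ^ k x, map_one' := ?_, map_mul' := ?_ }, ?_⟩
  · have h1 : W ^ k 1 = W ^ (0 : ℤ) := hsame _ _ (by rw [hk 1, zpow_zero])
    simpa using h1
  · intro x y
    have h1 : W ^ k (x * y) = W ^ (k x + k y) := hsame _ _ (by rw [hk, zpow_add, hk, hk])
    simpa [zpow_add] using h1
  · intro h a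
    have h1 : α h a = uconj (V ^ k h) a := by
      conv_lhs => rw [← hk h]
      exact hαzpow (k h) a
    rw [h1, ← hWzc (k h)]
    rfl
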